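/- Let A be an m×m real matrix. The map F_A(x) = x + (Ax)^3 is non-proper if and only if there is a sequence y_n ∈ Im(Aᵀ) with ‖y_n‖ → ∞ such that Ay_n + A((Ay_n)^3) is bounded. -/

import Mathlib

open Filter Matrix

namespace Stmt3Aux

variable {m : ℕ} (A : Matrix (Fin m) (Fin m) ℝ)

noncomputable section

/-- coordinatewise cube -/
def cube (v : Fin m → ℝ) : Fin m → ℝ := fun i => (v i) ^ 3

lemma continuous_cube : Continuous (cube (m := m)) :=
  continuous_pi fun i => ((continuous_apply i).pow 3)

lemma norm_cube_le (v : Fin m → ℝ) : ‖cube v‖ ≤ ‖v‖ ^ 3 := by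
  refine (pi_norm_le_iff_of_nonneg (by positivity)).2 fun i => ?_
  calc ‖cube v i‖ = ‖v i‖ ^ 3 := by simp [cube, abs_pow]
    _ ≤ ‖v‖ ^ 3 := by gcongr; exact norm_le_pi_norm v i

lemma isCompl_ker_range :
    IsCompl (LinearMap.ker A.mulVecLin) (LinearMap.range Aᵀ.mulVecLin) := by
  have hdis : Disjoint (LinearMap.ker A.mulVecLin) (LinearMap.range Aᵀ.mulVecLin) := by
    rw [Submodule.disjoint_def]
    rintro x hx ⟨u, rfl⟩
    have hx0 : A *ᵥ (Aᵀ *ᵥ u) = 0 := hx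
    have h1 := dotProduct_mulVec u A (Aᵀ *ᵥ u)
    rw [hx0, dotProduct_zero] at h1
    rw [show u ᵥ* A = Aᵀ *ᵥ u by rw [← transpose_transpose A, vecMul_transpose, transpose_transpose]]
      at h1
    show Aᵀ *ᵥ u = 0
    exact dotProduct_self_eq_zero.1 h1.symm
  refine ⟨hdis, codisjoint_iff.2 ?_⟩
  apply Submodule.eq_top_of_disjoint _ _ ?_ hdis
  have h2 := LinearMap.finrank_range_add_finrank_ker A.mulVecLin
  have h3 : Module.finrank ℝ (LinearMap.range Aᵀ.mulVecLin) = Aᵀ.rank := rfl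
  have h4 : Module.finrank ℝ (LinearMap.range A.mulVecLin) = A.rank := rfl
  rw [h3, rank_transpose]
  rw [h4] at h2
  omega

/-- projection onto the kernel -/
def prK : (Fin m → ℝ) →ₗ[ℝ] (Fin m → ℝ) :=
  (LinearMap.ker A.mulVecLin).subtype ∘ₗ
    Submodule.linearProjOfIsCompl _ _ (isCompl_ker_range A)

/-- projection onto the range of the transpose -/
def prR : (Fin m → ℝ) →ₗ[ℝ] (Fin m → ℝ) :=
  (LinearMap.range Aᵀ.mulVecLin).subtype ∘ₗ
    Submodule.linearProjOfIsCompl _ _ (isCompl_ker_range A).symm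

lemma prK_add_prR (x : Fin m → ℝ) : prK A x + prR A x = x :=
  Submodule.projection_add_projection_eq_self (isCompl_ker_range A) x

lemma prR_mem (x : Fin m → ℝ) : prR A x ∈ LinearMap.range Aᵀ.mulVecLin :=
  (Submodule.linearProjOfIsCompl _ _ (isCompl_ker_range A).symm x).2

lemma prK_mem (x : Fin m → ℝ) : prK A x ∈ LinearMap.ker A.mulVecLin :=
  (Submodule.linearProjOfIsCompl _ _ (isCompl_ker_range A) x).2

lemma prR_of_mem {x : Fin m → ℝ} (hx : x ∈ LinearMap.range Aᵀ.mulVecLin) : prR A x = x := by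
  exact Submodule.projection_apply_of_mem_left (isCompl_ker_range A).symm hx

lemma prR_of_ker {x : Fin m → ℝ} (hx : x ∈ LinearMap.ker A.mulVecLin) : prR A x = 0 := by
  exact Submodule.projection_apply_of_mem_right (isCompl_ker_range A).symm hx

lemma mulVec_prK (x : Fin m → ℝ) : A *ᵥ (prK A x) = 0 := prK_mem A x

lemma mulVec_prR (x : Fin m → ℝ) : A *ᵥ (prR A x) = A *ᵥ x := by
  conv_rhs => rw [← prK_add_prR A x]
  rw [mulVec_add, mulVec_prK, zero_add]

lemma exists_antilip : ∃ c : ℝ, 0 ≤ c ∧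
    ∀ v ∈ LinearMap.range Aᵀ.mulVecLin, ‖v‖ ≤ c * ‖A *ᵥ v‖ := by
  set R := LinearMap.range Aᵀ.mulVecLin with hR
  set g : R →ₗ[ℝ] (Fin m → ℝ) := A.mulVecLin ∘ₗ R.subtype with hg
  have hginj : Function.Injective g := by
    rw [← LinearMap.ker_eq_bot, Submodule.eq_bot_iff]
    rintro ⟨v, hv⟩ hv0
    have hvk : v ∈ LinearMap.ker A.mulVecLin := by
      simpa [hg, LinearMap.mem_ker] using hv0
    have : v = 0 := Submodule.disjoint_def.1 (isCompl_ker_range A).disjoint v hvk hv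
    exact Subtype.ext this
  let e := LinearEquiv.ofInjective g hginj
  let s := LinearMap.toContinuousLinearMap e.symm.toLinearMap
  refine ⟨max ‖s‖ 0, le_max_right _ _, fun v hv => ?_⟩
  have hnorm : ‖e ⟨v, hv⟩‖ = ‖A *ᵥ v‖ := by
    have : ((e ⟨v, hv⟩ : LinearMap.range g) : Fin m → ℝ) = g ⟨v, hv⟩ :=
      LinearEquiv.ofInjective_apply g ⟨v, hv⟩
    rw [show ‖e ⟨v, hv⟩‖ = ‖((e ⟨v, hv⟩ : LinearMap.range g) : Fin m → ℝ)‖ from rfl, this]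
    rfl
  calc ‖v‖ = ‖(⟨v, hv⟩ : R)‖ := rfl
    _ = ‖e.symm (e ⟨v, hv⟩)‖ := by rw [e.symm_apply_apply]
    _ = ‖s (e ⟨v, hv⟩)‖ := rfl
    _ ≤ ‖s‖ * ‖e ⟨v, hv⟩‖ := s.le_opNorm _
    _ ≤ max ‖s‖ 0 * ‖A *ᵥ v‖ := by
        rw [hnorm]
        exact mul_le_mul_of_nonneg_right (le_max_left _ _) (norm_nonneg _)

end
end Stmt3Aux

open Stmt3Aux

theorem stmt3 {m : ℕ} (A : Matrix (Fin m) (Fin m) ℝ) :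
    (¬ ∀ K : Set (Fin m → ℝ), IsCompact K →
        IsCompact ((fun x => x + fun i => (A.mulVec x i) ^ 3) ⁻¹' K)) ↔
    ∃ y : ℕ → Fin m → ℝ,
      (∀ n, y n ∈ LinearMap.range (Matrix.mulVecLin Aᵀ)) ∧
      Tendsto (fun n => ‖y n‖) atTop atTop ∧
      ∃ C : ℝ, ∀ n,
        ‖A.mulVec (y n) + A.mulVec (fun i => (A.mulVec (y n) i) ^ 3)‖ ≤ C := by
  set F : (Fin m → ℝ) → (Fin m → ℝ) := fun x => x + fun i => (A.mulVec x i) ^ 3 with hF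
  have hFc : Continuous F := by
    have : F = fun x => x + cube (A *ᵥ x) := rfl
    rw [this]
    exact continuous_id.add (continuous_cube.comp (A.mulVecLin.toContinuousLinearMap.continuous))
  -- operator-type bound for mulVec
  obtain ⟨CA, hCA0, hCA⟩ : ∃ CA : ℝ, 0 ≤ CA ∧ ∀ x : Fin m → ℝ, ‖A *ᵥ x‖ ≤ CA * ‖x‖ := by
    refine ⟨max ‖A.mulVecLin.toContinuousLinearMap‖ 0, le_max_right _ _, fun x => ?_⟩
    calc ‖A *ᵥ x‖ = ‖A.mulVecLin.toContinuousLinearMap x‖ := rfl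
      _ ≤ ‖A.mulVecLin.toContinuousLinearMap‖ * ‖x‖ := ContinuousLinearMap.le_opNorm _ _
      _ ≤ _ := mul_le_mul_of_nonneg_right (le_max_left _ _) (norm_nonneg _)
  obtain ⟨CP, hCP0, hCP⟩ : ∃ CP : ℝ, 0 < CP ∧ ∀ x : Fin m → ℝ, ‖prR A x‖ ≤ CP * ‖x‖ := by
    refine ⟨max ‖(prR A).toContinuousLinearMap‖ 1, lt_max_of_lt_right one_pos, fun x => ?_⟩
    calc ‖prR A x‖ = ‖(prR A).toContinuousLinearMap x‖ := rfl
      _ ≤ ‖(prR A).toContinuousLinearMap‖ * ‖x‖ := ContinuousLinearMap.le_opNorm _ _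
      _ ≤ _ := mul_le_mul_of_nonneg_right (le_max_left _ _) (norm_nonneg _)
  constructor
  · -- non-proper → sequence
    intro h
    push_neg at h
    obtain ⟨K, hKc, hKnc⟩ := h
    set S := F ⁻¹' K with hS
    have hScl : IsClosed S := hKc.isClosed.preimage hFc
    have hSnb : ¬ Bornology.IsBounded S := fun hb => hKnc (Metric.isCompact_of_isClosed_isBounded hScl hb)
    obtain ⟨CK, hCK⟩ := isBounded_iff_forall_norm_le.1 hKc.isBounded
    -- prR is unbounded on S
    have key : ∀ n : ℕ, ∃ x ∈ S, (n : ℝ) ≤ ‖prR A x‖ := by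
      intro n
      by_contra hcon
      push_neg at hcon
      apply hSnb
      rw [isBounded_iff_forall_norm_le]
      refine ⟨CK + (CA * n) ^ 3, fun x hx => ?_⟩
      have h1 : ‖A *ᵥ x‖ ≤ CA * n := by
        rw [← mulVec_prR]
        calc ‖A *ᵥ prR A x‖ ≤ CA * ‖prR A x‖ := hCA _
          _ ≤ CA * n := by
              have := (hcon x hx).le
              gcongr
      have h2 : x = F x - cube (A *ᵥ x) := by
        show x = (x + cube (A *ᵥ x)) - cube (A *ᵥ x)
        abel
      calc ‖x‖ = ‖F x - cube (A *ᵥ x)‖ := by rw [← h2]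
        _ ≤ ‖F x‖ + ‖cube (A *ᵥ x)‖ := norm_sub_le _ _
        _ ≤ CK + (CA * n) ^ 3 := by
            gcongr
            · exact hCK _ hx
            · calc ‖cube (A *ᵥ x)‖ ≤ ‖A *ᵥ x‖ ^ 3 := norm_cube_le _
                _ ≤ (CA * n) ^ 3 := by gcongr
    choose x hxS hxn using key
    refine ⟨fun n => prR A (x n), fun n => prR_mem A _, ?_, ?_⟩
    · exact tendsto_atTop_mono hxn tendsto_natCast_atTop_atTop
    · refine ⟨CA * CK, fun n => ?_⟩
      have h3 : A.mulVec (prR A (x n)) + A.mulVec (fun i => (A.mulVec (prR A (x n)) i) ^ 3)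
          = A *ᵥ (F (x n)) := by
        rw [mulVec_prR, ← mulVec_add]
      rw [h3]
      calc ‖A *ᵥ F (x n)‖ ≤ CA * ‖F (x n)‖ := hCA _
        _ ≤ CA * CK := by gcongr; exact hCK _ (hxS n)
  · -- sequence → non-proper
    rintro ⟨y, hyR, hytop, C, hyC⟩
    obtain ⟨c, hc0, hc⟩ := exists_antilip A
    have hC0 : 0 ≤ C := le_trans (norm_nonneg _) (hyC 0)
    intro hall
    have hcomp := hall (Metric.closedBall 0 (c * C)) (isCompact_closedBall _ _)
    obtain ⟨M, hM⟩ := isBounded_iff_forall_norm_le.1 hcomp.isBounded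
    -- construct x n
    set x : ℕ → Fin m → ℝ := fun n => y n - prK A (cube (A *ᵥ y n)) with hx
    have hAx : ∀ n, A *ᵥ x n = A *ᵥ y n := by
      intro n
      rw [hx]
      simp only [mulVec_sub, mulVec_prK, sub_zero]
    have hFx : ∀ n, F (x n) = y n + prR A (cube (A *ᵥ y n)) := by
      intro n
      have hz : prR A (cube (A *ᵥ y n)) = cube (A *ᵥ y n) - prK A (cube (A *ᵥ y n)) :=
        eq_sub_of_add_eq' (prK_add_prR A _)
      show x n + cube (A *ᵥ x n) = _
      rw [hAx]
      show (y n - prK A (cube (A *ᵥ y n))) + cube (A *ᵥ y n) = _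
      rw [hz]
      abel
    have hFxR : ∀ n, F (x n) ∈ LinearMap.range Aᵀ.mulVecLin := by
      intro n
      rw [hFx]
      exact Submodule.add_mem _ (hyR n) (prR_mem A _)
    have hFxb : ∀ n, ‖F (x n)‖ ≤ c * C := by
      intro n
      refine le_trans (hc _ (hFxR n)) ?_
      have h4 : A *ᵥ (F (x n)) = A.mulVec (y n) + A.mulVec (fun i => (A.mulVec (y n) i) ^ 3) := by
        rw [hFx, mulVec_add, mulVec_prR]
        rfl
      rw [h4]
      gcongr
      exact hyC n
    have hxmem : ∀ n, x n ∈ F ⁻¹' (Metric.closedBall 0 (c * C)) := by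
      intro n
      simp only [Set.mem_preimage, Metric.mem_closedBall, dist_zero_right]
      exact hFxb n
    -- ‖x n‖ ≥ ‖y n‖ / CP, so unbounded
    have hyx : ∀ n, ‖y n‖ ≤ CP * ‖x n‖ := by
      intro n
      have h5 : prR A (x n) = y n := by
        rw [hx, map_sub, prR_of_mem A (hyR n), prR_of_ker A (prK_mem A _), sub_zero]
      rw [← h5]
      exact hCP _
    obtain ⟨n, hn⟩ := (hytop.eventually_ge_atTop (CP * M + CP)).exists
    have h6 : ‖y n‖ ≤ CP * M := by
      calc ‖y n‖ ≤ CP * ‖x n‖ := hyx n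
        _ ≤ CP * M := mul_le_mul_of_nonneg_left (hM _ (hxmem n)) hCP0.le
    nlinarith [hCP0]
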